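/- The pairwise-optimal gossip coverage map T_{ij} maps connected N-partitions to connected N-partitions; in particular if p ∈ ConnPart and (i,j) ∈ E(p), then T_{ij}(p) ∈ ConnPart. -/

import Mathlib

open scoped ENNReal symmDiff

/-- Weight of a path (list of vertices): sum of edge weights of consecutive pairs. -/
noncomputable def pathWeight {V : Type*} (w : V → V → ℝ≥0∞) : List V → ℝ≥0∞
  | [] => 0
  | [_] => 0
  | a :: b :: l => w a b + pathWeight w (b :: l)
termination_by l => l.length

/-- `l` is a walk from `x` to `y` inside the induced subgraph `G ∩ S`. -/
def IsWalkIn {V : Type*} (G : SimpleGraph V) (S : Set V) (x y : V) (l : List V) : Prop :=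
  l.Chain' G.Adj ∧ (∀ v ∈ l, v ∈ S) ∧ l.head? = some x ∧ l.getLast? = some y

/-- Shortest-path distance between `x` and `y` in the induced subgraph `G ∩ S`
(`⊤` if there is no walk). -/
noncomputable def gdist {V : Type*} (G : SimpleGraph V) (w : V → V → ℝ≥0∞)
    (S : Set V) (x y : V) : ℝ≥0∞ :=
  sInf (pathWeight w '' {l | IsWalkIn G S x y l})

/-- `S` is a nonempty subset inducing a connected subgraph of `G`. -/
def ConnectedIn {V : Type*} (G : SimpleGraph V) (S : Set V) : Prop :=
  S.Nonempty ∧ ∀ x ∈ S, ∀ y ∈ S, ∃ l, IsWalkIn G S x y l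

/-- Two subsets are adjacent if some edge of `G` joins them. -/
def AdjSets {V : Type*} (G : SimpleGraph V) (A B : Set V) : Prop :=
  ∃ a ∈ A, ∃ b ∈ B, G.Adj a b

/-- One-center cost `H₁(h; S) = ∑_{k ∈ S} d_S(h,k) φ(k)`. -/
noncomputable def H1 {V : Type*} [Fintype V] (G : SimpleGraph V) (w : V → V → ℝ≥0∞)
    (φ : V → ℝ≥0∞) (h : V) (S : Set V) : ℝ≥0∞ :=
  ∑ k : V, S.indicator (fun k => gdist G w S h k * φ k) k

/-- The set of minimizers of `H₁(·; S)` over `S`. -/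
def argminH1 {V : Type*} [Fintype V] (G : SimpleGraph V) (w : V → V → ℝ≥0∞)
    (φ : V → ℝ≥0∞) (S : Set V) : Set V :=
  {h ∈ S | ∀ h' ∈ S, H1 G w φ h S ≤ H1 G w φ h' S}

/-- Generalized centroid: least element (total order on `V`) of the argmin of `H₁(·; S)`. -/
noncomputable def Cd {V : Type*} [Fintype V] [LinearOrder V] [Nonempty V]
    (G : SimpleGraph V) (w : V → V → ℝ≥0∞) (φ : V → ℝ≥0∞) (S : Set V) : V :=
  if hne : ((argminH1 G w φ S).toFinite.toFinset).Nonempty then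
    (argminH1 G w φ S).toFinite.toFinset.min' hne
  else Classical.arbitrary V

/-- Connected `N`-partition of the vertex set. -/
def IsConnPart {V : Type*} (G : SimpleGraph V) {N : ℕ} (p : Fin N → Set V) : Prop :=
  (⋃ i, p i) = Set.univ ∧ (∀ i j, i ≠ j → p i ∩ p j = ∅) ∧
    (∀ i, (p i).Nonempty) ∧ (∀ i, ConnectedIn G (p i))

/-- Multicenter cost `H_multicenter(p, c) = ∑ᵢ H₁(cᵢ; pᵢ)`. -/
noncomputable def Hmc {V : Type*} [Fintype V] (G : SimpleGraph V) (w : V → V → ℝ≥0∞)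
    (φ : V → ℝ≥0∞) {N : ℕ} (p : Fin N → Set V) (c : Fin N → V) : ℝ≥0∞ :=
  ∑ i, H1 G w φ (c i) (p i)

/-- `H_exp(p) = ∑ᵢ H₁(Cd(pᵢ); pᵢ)`. -/
noncomputable def Hexp {V : Type*} [Fintype V] [LinearOrder V] [Nonempty V]
    (G : SimpleGraph V) (w : V → V → ℝ≥0∞) (φ : V → ℝ≥0∞) {N : ℕ}
    (p : Fin N → Set V) : ℝ≥0∞ :=
  ∑ i, H1 G w φ (Cd G w φ (p i)) (p i)

/-- `p` is a Voronoi partition of `Q` generated by `c` (distances `d_G` in the full graph). -/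
def IsVoronoi {V : Type*} (G : SimpleGraph V) (w : V → V → ℝ≥0∞) {N : ℕ}
    (p : Fin N → Set V) (c : Fin N → V) : Prop :=
  ∀ i, c i ∈ p i ∧ ∀ k ∈ p i, ∀ j, j ≠ i →
    gdist G w Set.univ k (c i) ≤ gdist G w Set.univ k (c j)

/-- Two-center cost `D(a,b) = ∑_{h ∈ u} min{d_u(h,a), d_u(h,b)}`. -/
noncomputable def Dtwo {V : Type*} [Fintype V] (G : SimpleGraph V) (w : V → V → ℝ≥0∞)
    (u : Set V) (a b : V) : ℝ≥0∞ :=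
  ∑ h : V, u.indicator (fun h => min (gdist G w u h a) (gdist G w u h b)) h

/-- `p` is a pairwise-optimal connected `N`-partition. -/
def PairwiseOptimal {V : Type*} [Fintype V] [LinearOrder V] [Nonempty V]
    (G : SimpleGraph V) (w : V → V → ℝ≥0∞) (φ : V → ℝ≥0∞) {N : ℕ}
    (p : Fin N → Set V) : Prop :=
  IsConnPart G p ∧ ∀ i j : Fin N, i ≠ j → AdjSets G (p i) (p j) →
    H1 G w φ (Cd G w φ (p i)) (p i) + H1 G w φ (Cd G w φ (p j)) (p j)
      = ⨅ a ∈ p i ∪ p j, ⨅ b ∈ p i ∪ p j, Dtwo G w (p i ∪ p j) a b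

/-- `p` is centroidal Voronoi in pairs. -/
def CVIP {V : Type*} [Fintype V] [LinearOrder V] [Nonempty V]
    (G : SimpleGraph V) (w : V → V → ℝ≥0∞) (φ : V → ℝ≥0∞) {N : ℕ}
    (p : Fin N → Set V) : Prop :=
  ∀ i j : Fin N, i ≠ j → AdjSets G (p i) (p j) → ∀ k ∈ p i,
    gdist G w (p i ∪ p j) k (Cd G w φ (p i)) ≤ gdist G w (p i ∪ p j) k (Cd G w φ (p j))

section WalkAux

variable {V : Type*} {G : SimpleGraph V} {w : V → V → ℝ≥0∞} {S T : Set V} {x y z v : V}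
  {l l₁ l₂ : List V}

@[simp] lemma pathWeight_nil : pathWeight w ([] : List V) = 0 := by simp [pathWeight]
@[simp] lemma pathWeight_single : pathWeight w [x] = 0 := by simp [pathWeight]
@[simp] lemma pathWeight_cons_cons :
    pathWeight w (x :: y :: l) = w x y + pathWeight w (y :: l) := by
  rw [pathWeight]

lemma pathWeight_append (l₁ l₂ : List V) (v : V) :
    pathWeight w (l₁ ++ v :: l₂) = pathWeight w (l₁ ++ [v]) + pathWeight w (v :: l₂) := by
  induction l₁ with
  | nil => simp
  | cons a t ih =>
    cases t with
    | nil => simp [pathWeight_cons_cons]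
    | cons c r =>
      simp only [List.cons_append, pathWeight_cons_cons] at *
      rw [ih, add_assoc]

lemma IsWalkIn.ne_nil (h : IsWalkIn G S x y l) : l ≠ [] := by
  rintro rfl; simp [IsWalkIn] at h

lemma IsWalkIn.mono (h : IsWalkIn G S x y l) (hST : S ⊆ T) : IsWalkIn G T x y l :=
  ⟨h.1, fun v hv => hST (h.2.1 v hv), h.2.2⟩

lemma isWalkIn_singleton (hx : x ∈ S) : IsWalkIn G S x x [x] := by
  simp [IsWalkIn, hx, List.Chain']

lemma IsWalkIn.start_mem (h : IsWalkIn G S x y l) : x ∈ S := by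
  obtain ⟨_, hm, hh, _⟩ := h
  exact hm x (List.mem_of_mem_head? hh)

lemma IsWalkIn.reverse (h : IsWalkIn G S x y l) : IsWalkIn G S y x l.reverse := by
  obtain ⟨hc, hm, hh, ht⟩ := h
  refine ⟨?_, fun v hv => hm v (by simpa using hv), by simpa using ht, by simpa using hh⟩
  rw [List.Chain', List.isChain_reverse]
  exact List.IsChain.imp (fun a b hab => hab.symm) hc

lemma IsWalkIn.append (h₁ : IsWalkIn G S x v l₁) (h₂ : IsWalkIn G S v y l₂) :
    IsWalkIn G S x y (l₁ ++ l₂.tail) := by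
  obtain ⟨hc₁, hm₁, hh₁, ht₁⟩ := h₁
  obtain ⟨hc₂, hm₂, hh₂, ht₂⟩ := h₂
  obtain ⟨t, rfl⟩ : ∃ t, l₂ = v :: t := by
    cases l₂ with
    | nil => simp at hh₂
    | cons a t =>
      obtain rfl : a = v := by simpa using hh₂
      exact ⟨t, rfl⟩
  simp only [List.tail_cons]
  refine ⟨?_, ?_, ?_, ?_⟩
  · rw [List.Chain', List.isChain_append]
    refine ⟨hc₁, (List.isChain_cons.mp hc₂).2, fun a ha b hb => ?_⟩
    rw [ht₁] at ha
    have := (List.isChain_cons.mp hc₂).1 b hb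
    simpa [(by simpa using ha : v = a).symm] using this
  · intro u hu
    rcases List.mem_append.mp hu with h | h
    · exact hm₁ u h
    · exact hm₂ u (List.mem_cons_of_mem _ h)
  · cases l₁ with
    | nil => simp at hh₁
    | cons a s => simpa using hh₁
  · cases t with
    | nil => simpa using ht₁.trans (by simpa using ht₂)
    | cons a s => rw [List.getLast?_append_of_ne_nil _ (by simp)]; simpa using ht₂

lemma exists_dup_decomp {l : List V} (h : ¬ l.Nodup) :
    ∃ (l₁ : List V) (v : V) (l₂ l₃ : List V), l = l₁ ++ v :: l₂ ++ v :: l₃ := by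
  induction l with
  | nil => simp at h
  | cons a t ih =>
    by_cases hat : a ∈ t
    · obtain ⟨l₂, l₃, rfl⟩ := List.append_of_mem hat
      exact ⟨[], a, l₂, l₃, by simp⟩
    · have ht : ¬ t.Nodup := by
        intro hn; exact h (List.nodup_cons.mpr ⟨hat, hn⟩)
      obtain ⟨l₁, v, l₂, l₃, rfl⟩ := ih ht
      exact ⟨a :: l₁, v, l₂, l₃, by simp⟩

lemma shorten_aux (n : ℕ) : ∀ l : List V, l.length ≤ n → IsWalkIn G S x y l →
    ∃ l', IsWalkIn G S x y l' ∧ l'.Nodup ∧ pathWeight w l' ≤ pathWeight w l := by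
  induction n with
  | zero =>
    intro l hl h
    exact absurd (List.length_eq_zero_iff.mp (Nat.le_zero.mp hl)) h.ne_nil
  | succ n ih =>
    intro l hl h
    by_cases hnd : l.Nodup
    · exact ⟨l, h, hnd, le_rfl⟩
    obtain ⟨l₁, v, l₂, l₃, rfl⟩ := exists_dup_decomp hnd
    obtain ⟨hc, hm, hh, ht⟩ := h
    have key : IsWalkIn G S x y (l₁ ++ v :: l₃) := by
      rw [List.Chain', List.isChain_append] at hc
      obtain ⟨hc₁, hc₂, hbd⟩ := hc
      rw [List.isChain_append] at hc₁
      refine ⟨?_, ?_, ?_, ?_⟩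
      · rw [List.Chain', List.isChain_append]
        exact ⟨hc₁.1, hc₂, fun a ha b hb => hc₁.2.2 a ha b (by simpa using hb)⟩
      · intro u hu
        apply hm
        simp only [List.mem_append, List.mem_cons] at hu ⊢
        tauto
      · cases l₁ with
        | nil => simpa using hh
        | cons a s => simpa using hh
      · rw [List.getLast?_append_cons] at ht ⊢
        exact ht
    have hlen : (l₁ ++ v :: l₃).length < (l₁ ++ v :: l₂ ++ v :: l₃).length := by
      simp
    obtain ⟨l', h1, h2, h3⟩ := ih _ (by simp at hl ⊢; omega) key
    refine ⟨l', h1, h2, h3.trans ?_⟩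
    have e1 : pathWeight w (l₁ ++ v :: l₂ ++ v :: l₃)
        = (pathWeight w (l₁ ++ [v]) + pathWeight w (v :: (l₂ ++ [v])))
          + pathWeight w (v :: l₃) := by
      rw [pathWeight_append (l₁ ++ v :: l₂) l₃ v,
        show (l₁ ++ v :: l₂) ++ [v] = l₁ ++ v :: (l₂ ++ [v]) by simp,
        pathWeight_append l₁ (l₂ ++ [v]) v]
    have e2 : pathWeight w (l₁ ++ v :: l₃)
        = pathWeight w (l₁ ++ [v]) + pathWeight w (v :: l₃) := pathWeight_append l₁ l₃ v
    rw [e1, e2]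
    exact add_le_add_left (le_add_right le_rfl) _

lemma shorten (h : IsWalkIn G S x y l) :
    ∃ l', IsWalkIn G S x y l' ∧ l'.Nodup ∧ pathWeight w l' ≤ pathWeight w l :=
  shorten_aux l.length l le_rfl h

lemma gdist_le (h : IsWalkIn G S x y l) : gdist G w S x y ≤ pathWeight w l :=
  sInf_le ⟨l, h, rfl⟩

lemma pathWeight_ne_top (hw : ∀ a b, G.Adj a b → w a b ≠ ⊤) :
    ∀ {l : List V}, l.Chain' G.Adj → pathWeight w l ≠ ⊤
  | [], _ => by simp
  | [x], _ => by simp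
  | a :: b :: t, hc => by
    rw [pathWeight_cons_cons]
    have h1 := List.isChain_cons_cons.mp hc
    exact ENNReal.add_ne_top.mpr ⟨hw a b h1.1, pathWeight_ne_top hw h1.2⟩

lemma gdist_self (hx : x ∈ S) : gdist G w S x x = 0 :=
  le_antisymm (by simpa using gdist_le (isWalkIn_singleton hx)) (zero_le)

lemma exists_shortest [Fintype V] (hne : ∃ l, IsWalkIn G S x y l) :
    ∃ l, IsWalkIn G S x y l ∧ l.Nodup ∧ pathWeight w l = gdist G w S x y := by
  classical
  set T : Set ℝ≥0∞ := pathWeight w '' {l | IsWalkIn G S x y l ∧ l.Nodup} with hT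
  have hTfin : T.Finite := by
    apply Set.Finite.image
    apply (List.finite_length_le V (Fintype.card V)).subset
    intro l hl
    exact hl.2.length_le_card
  have hTne : T.Nonempty := by
    obtain ⟨l, hl⟩ := hne
    obtain ⟨l', h1, h2, _⟩ := shorten (w := w) hl
    exact ⟨pathWeight w l', ⟨l', ⟨h1, h2⟩, rfl⟩⟩
  obtain ⟨l₀, ⟨hw₀, hnd₀⟩, hpw₀⟩ := hTne.csInf_mem hTfin
  refine ⟨l₀, hw₀, hnd₀, le_antisymm ?_ (gdist_le hw₀)⟩
  apply le_sInf
  rintro c ⟨l, hl, rfl⟩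
  obtain ⟨l', h1, h2, h3⟩ := shorten hl
  calc pathWeight w l₀ = sInf T := hpw₀
    _ ≤ pathWeight w l' := sInf_le ⟨l', ⟨h1, h2⟩, rfl⟩
    _ ≤ pathWeight w l := h3

lemma gdist_pos [Fintype V] (hw : ∀ a b, G.Adj a b → 0 < w a b) (hxy : x ≠ y) :
    0 < gdist G w S x y := by
  rw [pos_iff_ne_zero]
  intro h0
  have hne : ∃ l, IsWalkIn G S x y l := by
    by_contra hc
    push_neg at hc
    have : {l | IsWalkIn G S x y l} = ∅ := Set.eq_empty_iff_forall_notMem.mpr hc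
    rw [gdist, this] at h0
    simp at h0
  obtain ⟨l, hl, -, hpw⟩ := exists_shortest hne
  rw [h0] at hpw
  obtain ⟨hc, hm, hh, ht⟩ := hl
  match l, hh, ht with
  | [], hh, ht => simp at hh
  | [c], hh, ht =>
    simp at hh ht
    exact absurd (hh.symm.trans ht) hxy
  | c :: d :: t, hh, ht =>
    rw [pathWeight_cons_cons] at hpw
    have : w c d = 0 := by
      have := add_eq_zero.mp hpw
      exact this.1
    exact absurd this (ne_of_gt (hw c d (List.isChain_cons_cons.mp hc).1))

lemma exists_concat_of_getLast? (h : l.getLast? = some v) : ∃ l', l = l' ++ [v] := by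
  have hne : l ≠ [] := by rintro rfl; simp at h
  refine ⟨l.dropLast, ?_⟩
  conv_lhs => rw [← List.dropLast_append_getLast hne]
  rw [List.getLast?_eq_getLast hne] at h
  simp at h
  rw [h]

lemma pathWeight_join {t : List V} (h : l.getLast? = some v) :
    pathWeight w (l ++ (v :: t).tail) = pathWeight w l + pathWeight w (v :: t) := by
  obtain ⟨l', rfl⟩ := exists_concat_of_getLast? h
  rw [List.tail_cons, show l' ++ [v] ++ t = l' ++ v :: t by simp, pathWeight_append l' t v]

lemma gdist_triangle_walk [Fintype V] (h₁ : IsWalkIn G S x v l) :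
    gdist G w S x z ≤ pathWeight w l + gdist G w S v z := by
  rcases eq_or_ne (gdist G w S v z) ⊤ with h | h
  · simp [h]
  · have hne : ∃ m, IsWalkIn G S v z m := by
      by_contra hc
      push_neg at hc
      have : {m | IsWalkIn G S v z m} = ∅ := Set.eq_empty_iff_forall_notMem.mpr hc
      rw [gdist, this] at h
      simp at h
    obtain ⟨m, hm, _, hpw⟩ := exists_shortest (w := w) hne
    obtain ⟨tm, rfl⟩ : ∃ tm, m = v :: tm := by
      cases m with
      | nil => simp [IsWalkIn] at hm
      | cons c tm =>
        obtain rfl : c = v := by simpa using hm.2.2.1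
        exact ⟨tm, rfl⟩
    calc gdist G w S x z ≤ pathWeight w (l ++ (v :: tm).tail) := gdist_le (h₁.append hm)
      _ = pathWeight w l + pathWeight w (v :: tm) := pathWeight_join h₁.2.2.2
      _ = pathWeight w l + gdist G w S v z := by rw [hpw]

lemma IsWalkIn.split {s t : List V} (h : IsWalkIn G S x y (s ++ v :: t)) :
    IsWalkIn G S x v (s ++ [v]) ∧ IsWalkIn G S v y (v :: t) := by
  obtain ⟨hc, hm, hh, ht⟩ := h
  rw [List.Chain', List.isChain_append] at hc
  obtain ⟨hc₁, hc₂, hbd⟩ := hc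
  constructor
  · refine ⟨?_, ?_, ?_, ?_⟩
    · rw [List.Chain', List.isChain_append]
      exact ⟨hc₁, List.isChain_singleton v, fun a ha b hb => hbd a ha b (by simpa using hb)⟩
    · intro u hu
      apply hm
      simp only [List.mem_append, List.mem_cons] at hu ⊢
      tauto
    · cases s with
      | nil => simpa using hh
      | cons c r => simpa using hh
    · rw [List.getLast?_append_cons]
      simp
  · refine ⟨hc₂, ?_, by simp, ?_⟩
    · intro u hu
      exact hm u (by simp [hu])
    · rw [List.getLast?_append_cons] at ht
      exact ht

lemma gdist_ne_top_of_walk (hw : ∀ a b, G.Adj a b → w a b ≠ ⊤) (h : IsWalkIn G S x y l) :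
    gdist G w S x y ≠ ⊤ :=
  ne_top_of_le_ne_top (pathWeight_ne_top hw h.1) (gdist_le h)

lemma walk_in_le_region [Fintype V] (hw : ∀ a b, G.Adj a b → 0 < w a b ∧ w a b ≠ ⊤)
    (u : Set V) (hu : ConnectedIn G u) (a b : V) (ha : a ∈ u) (x : V)
    (hx : x ∈ u) (hxa : gdist G w u x a ≤ gdist G w u x b) :
    ∃ l, IsWalkIn G {y ∈ u | gdist G w u y a ≤ gdist G w u y b} x a l := by
  obtain ⟨l0, hl0⟩ := hu.2 x hx a ha
  obtain ⟨l, hl, -, hpw⟩ := exists_shortest (w := w) ⟨l0, hl0⟩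
  refine ⟨l, hl.1, fun v hv => ⟨hl.2.1 v hv, ?_⟩, hl.2.2⟩
  by_contra hlt
  push_neg at hlt
  obtain ⟨s, t, rfl⟩ := List.append_of_mem hv
  obtain ⟨hpre, hsuf⟩ := hl.split
  have hsum : pathWeight w (s ++ [v]) + pathWeight w (v :: t) = gdist G w u x a := by
    rw [← hpw, pathWeight_append s t v]
  have h2 : gdist G w u v a ≤ pathWeight w (v :: t) := gdist_le hsuf
  have w1top : pathWeight w (s ++ [v]) ≠ ⊤ :=
    pathWeight_ne_top (fun a b hab => (hw a b hab).2) hpre.1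
  have hfin : gdist G w u x b < gdist G w u x a := calc
    gdist G w u x b ≤ pathWeight w (s ++ [v]) + gdist G w u v b := gdist_triangle_walk hpre
    _ < pathWeight w (s ++ [v]) + gdist G w u v a := ENNReal.add_lt_add_left w1top hlt
    _ ≤ pathWeight w (s ++ [v]) + pathWeight w (v :: t) := add_le_add_right h2 _
    _ = gdist G w u x a := hsum
  exact lt_irrefl _ (hfin.trans_le hxa)

lemma walk_in_lt_region [Fintype V] (hw : ∀ a b, G.Adj a b → 0 < w a b ∧ w a b ≠ ⊤)
    (u : Set V) (hu : ConnectedIn G u) (a b : V) (hb : b ∈ u) (x : V)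
    (hx : x ∈ u) (hxb : gdist G w u x b < gdist G w u x a) :
    ∃ l, IsWalkIn G {y ∈ u | gdist G w u y b < gdist G w u y a} x b l := by
  obtain ⟨l0, hl0⟩ := hu.2 x hx b hb
  obtain ⟨l, hl, -, hpw⟩ := exists_shortest (w := w) ⟨l0, hl0⟩
  refine ⟨l, hl.1, fun v hv => ⟨hl.2.1 v hv, ?_⟩, hl.2.2⟩
  by_contra hge
  push_neg at hge
  obtain ⟨s, t, rfl⟩ := List.append_of_mem hv
  obtain ⟨hpre, hsuf⟩ := hl.split
  have hsum : pathWeight w (s ++ [v]) + pathWeight w (v :: t) = gdist G w u x b := by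
    rw [← hpw, pathWeight_append s t v]
  have h2 : gdist G w u v b ≤ pathWeight w (v :: t) := gdist_le hsuf
  have : gdist G w u x a < gdist G w u x a := calc
    gdist G w u x a ≤ pathWeight w (s ++ [v]) + gdist G w u v a := gdist_triangle_walk hpre
    _ ≤ pathWeight w (s ++ [v]) + gdist G w u v b := add_le_add_right hge _
    _ ≤ pathWeight w (s ++ [v]) + pathWeight w (v :: t) := add_le_add_right h2 _
    _ = gdist G w u x b := hsum
    _ < gdist G w u x a := hxb
  exact lt_irrefl _ this

lemma connectedIn_of_hub {a : V} (ha : a ∈ S) (h : ∀ x ∈ S, ∃ l, IsWalkIn G S x a l) :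
    ConnectedIn G S := by
  refine ⟨⟨a, ha⟩, fun x hx y hy => ?_⟩
  obtain ⟨lx, hlx⟩ := h x hx
  obtain ⟨ly, hly⟩ := h y hy
  exact ⟨lx ++ ly.reverse.tail, hlx.append hly.reverse⟩

lemma connectedIn_union {A B : Set V} (hA : ConnectedIn G A) (hB : ConnectedIn G B)
    (h : AdjSets G A B) : ConnectedIn G (A ∪ B) := by
  obtain ⟨a', ha', b', hb', hadj⟩ := h
  apply connectedIn_of_hub (Set.mem_union_left B ha')
  intro x hx
  rcases hx with hx | hx
  · obtain ⟨l, hl⟩ := hA.2 x hx a' ha'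
    exact ⟨l, hl.mono Set.subset_union_left⟩
  · obtain ⟨l, hl⟩ := hB.2 x hx b' hb'
    have hedge : IsWalkIn G (A ∪ B) b' a' [b', a'] := by
      refine ⟨?_, ?_, rfl, rfl⟩
      · simp [List.Chain', hadj.symm]
      · intro v hv
        simp only [List.mem_cons, List.mem_singleton, List.not_mem_nil, or_false] at hv
        rcases hv with rfl | rfl
        · exact Or.inr hb'
        · exact Or.inl ha'
    exact ⟨l ++ [b', a'].tail, (hl.mono Set.subset_union_right).append hedge⟩

end WalkAux

variable {V : Type*} [Fintype V] [LinearOrder V] [Nonempty V]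

theorem gossip_step_preserves_connpart (G : SimpleGraph V) (w : V → V → ℝ≥0∞)
    (φ : V → ℝ≥0∞) (hG : G.Connected) (hw : ∀ a b, G.Adj a b → 0 < w a b ∧ w a b ≠ ⊤)
    (hwsymm : ∀ a b, w a b = w b a) (hφ : ∀ v, 0 < φ v ∧ φ v ≠ ⊤)
    {N : ℕ} (p q : Fin N → Set V) (hp : IsConnPart G p) (i j : Fin N) (hij : i ≠ j)
    (hadj : AdjSets G (p i) (p j)) (a b : V)
    (ha : a ∈ p i ∪ p j) (hb : b ∈ p i ∪ p j) (hab : a ≠ b)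
    (hopt : ∀ a' ∈ p i ∪ p j, ∀ b' ∈ p i ∪ p j,
      Dtwo G w (p i ∪ p j) a b ≤ Dtwo G w (p i ∪ p j) a' b')
    (hqi : q i = {x ∈ p i ∪ p j |
      gdist G w (p i ∪ p j) x a ≤ gdist G w (p i ∪ p j) x b})
    (hqj : q j = {x ∈ p i ∪ p j |
      gdist G w (p i ∪ p j) x b < gdist G w (p i ∪ p j) x a})
    (hother : ∀ k, k ≠ i → k ≠ j → q k = p k) :
    IsConnPart G q := by
  obtain ⟨hpcov, hpdisj, hpne, hpconn⟩ := hp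
  have hwne : ∀ a b, G.Adj a b → w a b ≠ ⊤ := fun a b h => (hw a b h).2
  have hwpos : ∀ a b, G.Adj a b → 0 < w a b := fun a b h => (hw a b h).1
  have huconn : ConnectedIn G (p i ∪ p j) := connectedIn_union (hpconn i) (hpconn j) hadj
  have haqi : a ∈ q i := by
    rw [hqi]
    exact ⟨ha, by rw [gdist_self ha]; exact zero_le⟩
  have hbqj : b ∈ q j := by
    rw [hqj]
    exact ⟨hb, by rw [gdist_self hb]; exact gdist_pos hwpos (Ne.symm hab)⟩
  have hqiu : q i ⊆ p i ∪ p j := by rw [hqi]; exact fun x hx => hx.1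
  have hqju : q j ⊆ p i ∪ p j := by rw [hqj]; exact fun x hx => hx.1
  have hdisj_u : ∀ n, n ≠ i → n ≠ j → ∀ x, x ∈ p i ∪ p j → x ∈ p n → False := by
    intro n hni hnj x hxu hxn
    rcases hxu with h | h
    · exact Set.eq_empty_iff_forall_notMem.mp (hpdisj i n (Ne.symm hni)) x ⟨h, hxn⟩
    · exact Set.eq_empty_iff_forall_notMem.mp (hpdisj j n (Ne.symm hnj)) x ⟨h, hxn⟩
  refine ⟨?_, ?_, ?_, ?_⟩
  · rw [← hpcov]
    ext x
    simp only [Set.mem_iUnion]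
    constructor
    · rintro ⟨k, hk⟩
      by_cases hki : k = i
      · subst hki
        rcases hqiu hk with h | h
        · exact ⟨k, h⟩
        · exact ⟨j, h⟩
      by_cases hkj : k = j
      · subst hkj
        rcases hqju hk with h | h
        · exact ⟨i, h⟩
        · exact ⟨k, h⟩
      · exact ⟨k, (hother k hki hkj) ▸ hk⟩
    · rintro ⟨k, hk⟩
      by_cases hki : k = i
      · subst hki
        have hxu : x ∈ p k ∪ p j := Or.inl hk
        rcases le_or_gt (gdist G w (p k ∪ p j) x a) (gdist G w (p k ∪ p j) x b) with h | h
        · exact ⟨k, by rw [hqi]; exact ⟨hxu, h⟩⟩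
        · exact ⟨j, by rw [hqj]; exact ⟨hxu, h⟩⟩
      by_cases hkj : k = j
      · subst hkj
        have hxu : x ∈ p i ∪ p k := Or.inr hk
        rcases le_or_gt (gdist G w (p i ∪ p k) x a) (gdist G w (p i ∪ p k) x b) with h | h
        · exact ⟨i, by rw [hqi]; exact ⟨hxu, h⟩⟩
        · exact ⟨k, by rw [hqj]; exact ⟨hxu, h⟩⟩
      · exact ⟨k, (hother k hki hkj).symm ▸ hk⟩
  · intro k m hkm
    rw [Set.eq_empty_iff_forall_notMem]
    rintro x ⟨hxk, hxm⟩
    by_cases hki : k = i <;> by_cases hkj : k = j <;>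
      by_cases hmi : m = i <;> by_cases hmj : m = j
    all_goals first
      | (exact hkm (hki.trans hmi.symm))
      | (exact hkm (hkj.trans hmj.symm))
      | (exact hij (hki.symm.trans hkj))
      | (exact hij (hmi.symm.trans hmj))
      | skip
    · subst hki; subst hmj
      rw [hqi] at hxk
      rw [hqj] at hxm
      exact absurd hxk.2 (not_le.mpr hxm.2)
    · subst hki
      exact hdisj_u m hmi hmj x (hqiu hxk) ((hother m hmi hmj) ▸ hxm)
    · subst hkj; subst hmi
      rw [hqj] at hxk
      rw [hqi] at hxm
      exact absurd hxm.2 (not_le.mpr hxk.2)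
    · subst hkj
      exact hdisj_u m hmi hmj x (hqju hxk) ((hother m hmi hmj) ▸ hxm)
    · subst hmi
      exact hdisj_u k hki hkj x (hqiu hxm) ((hother k hki hkj) ▸ hxk)
    · subst hmj
      exact hdisj_u k hki hkj x (hqju hxm) ((hother k hki hkj) ▸ hxk)
    · exact Set.eq_empty_iff_forall_notMem.mp (hpdisj k m hkm) x
        ⟨(hother k hki hkj) ▸ hxk, (hother m hmi hmj) ▸ hxm⟩
  · intro k
    by_cases hki : k = i
    · exact ⟨a, hki ▸ haqi⟩
    by_cases hkj : k = j
    · exact ⟨b, hkj ▸ hbqj⟩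
    · rw [hother k hki hkj]; exact hpne k
  · intro k
    by_cases hki : k = i
    · subst hki
      rw [hqi]
      have hamem : a ∈ {x | x ∈ p k ∪ p j ∧
          gdist G w (p k ∪ p j) x a ≤ gdist G w (p k ∪ p j) x b} :=
        ⟨ha, by rw [gdist_self ha]; exact zero_le⟩
      exact connectedIn_of_hub hamem fun x hx =>
        walk_in_le_region hw (p k ∪ p j) huconn a b ha x hx.1 hx.2
    by_cases hkj : k = j
    · subst hkj
      rw [hqj]
      have hbmem : b ∈ {x | x ∈ p i ∪ p k ∧
          gdist G w (p i ∪ p k) x b < gdist G w (p i ∪ p k) x a} :=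
        ⟨hb, by rw [gdist_self hb]; exact gdist_pos hwpos (Ne.symm hab)⟩
      exact connectedIn_of_hub hbmem fun x hx =>
        walk_in_lt_region hw (p i ∪ p k) huconn a b hb x hx.1 hx.2
    · rw [hother k hki hkj]
      exact hpconn k
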